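/- arXiv:math/0402043 — 3 statements merged into one kernel-verified Lean document; each statement's English description precedes it below -/
import Mathlib

section
/- Let F : 𝒜 → ℬ be an exact functor (commuting with the shift and sending distinguished triangles to distinguished triangles) between pretriangulated categories, and suppose F admits both a left adjoint and a right adjoint. Then F is fully faithful if and only if there exists a spanning class Ω for 𝒜 such that for all objects a₁, a₂ in Ω and all integers i, the map induced by F from Hom_𝒜(a₁, a₂⟦i⟧) to Hom_ℬ(F a₁, F a₂⟦i⟧) is a bijection. -/
open CategoryTheory Limits

universe v₁ v₂ u₁ u₂

/-- A set `Ω` of objects of a category with shift is a *spanning class* if any object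
left- or right-orthogonal to all shifts of objects of `Ω` is zero. -/
def SpanningClass {C : Type u₁} [Category.{v₁} C] [Preadditive C] [HasShift C ℤ]
    (Ω : Set C) : Prop :=
  ∀ a : C,
    ((∀ b ∈ Ω, ∀ i : ℤ, ∀ f : a ⟶ b⟦i⟧, f = 0) → IsZero a) ∧
    ((∀ b ∈ Ω, ∀ i : ℤ, ∀ f : b ⟶ a⟦i⟧, f = 0) → IsZero a)

open CategoryTheory.Pretriangulated

section BijLemmas

variable {C : Type u₁} [Category.{v₁} C]

lemma postcomp_bij {X Y Y' : C} (b : Y ⟶ Y') [IsIso b] :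
    Function.Bijective (fun g : X ⟶ Y => g ≫ b) := by
  constructor
  · intro g₁ g₂ h
    simpa only [cancel_mono] using h
  · intro g
    exact ⟨g ≫ inv b, by simp⟩

lemma precomp_bij {X X' Y : C} (a : X' ⟶ X) [IsIso a] :
    Function.Bijective (fun g : X ⟶ Y => a ≫ g) := by
  constructor
  · intro g₁ g₂ h
    simpa only [cancel_epi] using h
  · intro g
    exact ⟨inv a ≫ g, by simp⟩

lemma conj_bij {X X' Y Y' : C} (a : X' ⟶ X) (b : Y ⟶ Y') [IsIso a] [IsIso b] :
    Function.Bijective (fun g : X ⟶ Y => a ≫ g ≫ b) := by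
  constructor
  · intro g₁ g₂ h
    simp only [cancel_mono, cancel_epi] at h
    exact h
  · intro g
    exact ⟨inv a ≫ g ≫ inv b, by simp⟩

end BijLemmas

section Helpers

variable {C : Type u₁} [Category.{v₁} C] [Preadditive C] [HasShift C ℤ]
  [HasZeroObject C] [∀ n : ℤ, (shiftFunctor C n).Additive] [Pretriangulated C]

/-- If postcomposition with the first morphism of a distinguished triangle is surjective on
maps from `w` and injective on maps from `w⟦-1⟧`, then every map from `w` to the third object
vanishes. -/
lemma hom_to_obj₃_eq_zero (T : Triangle C) (hT : T ∈ distTriang C) (w : C)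
    (hinj : ∀ φ : (w⟦(-1:ℤ)⟧ ⟶ T.obj₁), φ ≫ T.mor₁ = 0 → φ = 0)
    (hsurj : ∀ ψ : w ⟶ T.obj₂, ∃ φ : w ⟶ T.obj₁, φ ≫ T.mor₁ = ψ)
    (f : w ⟶ T.obj₃) : f = 0 := by
  have adj := (shiftEquiv C (1:ℤ)).symm.toAdjunction
  -- adj : shiftFunctor C (-1) ⊣ shiftFunctor C 1
  have hzero : ∀ {y : C}, adj.homEquiv w y 0 = 0 := by
    intro y
    rw [Adjunction.homEquiv_unit]
    simp
  have h1 : f ≫ T.mor₃ = 0 := by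
    set u := (adj.homEquiv w T.obj₁).symm (f ≫ T.mor₃) with hu
    have h2 : adj.homEquiv w T.obj₂ (u ≫ T.mor₁) = 0 := by
      rw [Adjunction.homEquiv_naturality_right]
      rw [Equiv.apply_symm_apply]
      simp only [Equivalence.symm_inverse, Equivalence.symm_functor,
        shiftEquiv'_functor, shiftEquiv'_inverse]
      change (f ≫ T.mor₃) ≫ (shiftFunctor C 1).map T.mor₁ = 0
      rw [Category.assoc, comp_distTriang_mor_zero₃₁ T hT, Limits.comp_zero]
    have h3 : u ≫ T.mor₁ = 0 := by
      apply (adj.homEquiv w T.obj₂).injective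
      rw [h2, hzero]
    have h4 : u = 0 := hinj u h3
    have : f ≫ T.mor₃ = adj.homEquiv w T.obj₁ u := (Equiv.apply_symm_apply _ _).symm
    rw [this, h4]
    exact hzero
  obtain ⟨g, hg⟩ := Triangle.coyoneda_exact₃ T hT f h1
  obtain ⟨φ, hφ⟩ := hsurj g
  rw [hg, ← hφ, Category.assoc, comp_distTriang_mor_zero₁₂ T hT, Limits.comp_zero]

/-- Dual version: maps out of the third object vanish. -/
lemma hom_from_obj₃_eq_zero (T : Triangle C) (hT : T ∈ distTriang C) (w : C)
    (hinj : ∀ φ : T.obj₂ ⟶ w, T.mor₁ ≫ φ = 0 → φ = 0)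
    (hsurj : ∀ ψ : T.obj₁ ⟶ w⟦(-1:ℤ)⟧, ∃ φ : T.obj₂ ⟶ w⟦(-1:ℤ)⟧, T.mor₁ ≫ φ = ψ)
    (f : T.obj₃ ⟶ w) : f = 0 := by
  have adj := (shiftEquiv C (1:ℤ)).toAdjunction
  -- adj : shiftFunctor C 1 ⊣ shiftFunctor C (-1)
  have h1 : T.mor₂ ≫ f = 0 := by
    apply hinj
    rw [← Category.assoc, comp_distTriang_mor_zero₁₂ T hT, Limits.zero_comp]
  obtain ⟨h, hh⟩ := Triangle.yoneda_exact₃ T hT f h1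
  obtain ⟨φ, hφ⟩ := hsurj (adj.homEquiv T.obj₁ w h)
  have h2 := Adjunction.homEquiv_naturality_left_symm (adj := adj) T.mor₁ φ
  erw [hφ, Equiv.symm_apply_apply] at h2
  erw [hh, h2, ← Category.assoc, comp_distTriang_mor_zero₃₁ T hT, Limits.zero_comp]

end Helpers

/-- An exact functor between pretriangulated categories admitting both a left and a right
adjoint is fully faithful iff there is a spanning class `Ω` such that `F` induces bijections
on all `Hom(a₁, a₂⟦i⟧)` for `a₁, a₂ ∈ Ω`. -/
theorem bridgeland_fully_faithful_criterion
    {A : Type u₁} {B : Type u₂} [Category.{v₁} A] [Category.{v₂} B]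
    [HasShift A ℤ] [HasShift B ℤ] [Preadditive A] [Preadditive B]
    [HasZeroObject A] [HasZeroObject B]
    [∀ n : ℤ, (shiftFunctor A n).Additive] [∀ n : ℤ, (shiftFunctor B n).Additive]
    [Pretriangulated A] [Pretriangulated B]
    (F : A ⥤ B) [F.CommShift ℤ] [F.IsTriangulated]
    [F.IsLeftAdjoint] [F.IsRightAdjoint] :
    (F.Full ∧ F.Faithful) ↔
      ∃ Ω : Set A, SpanningClass Ω ∧
        ∀ a₁ ∈ Ω, ∀ a₂ ∈ Ω, ∀ i : ℤ,
          Function.Bijective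
            (fun f : a₁ ⟶ a₂⟦i⟧ => F.map f ≫ (F.commShiftIso i).hom.app a₂) := by
  constructor
  · rintro ⟨hFull, hFaithful⟩
    refine ⟨Set.univ, ?_, ?_⟩
    · intro a
      constructor
      · intro h
        rw [IsZero.iff_id_eq_zero]
        have h0 := h a (Set.mem_univ a) 0 ((shiftFunctorZero A ℤ).inv.app a)
        calc 𝟙 a = (shiftFunctorZero A ℤ).inv.app a ≫ (shiftFunctorZero A ℤ).hom.app a := by simp
          _ = 0 := by rw [h0, Limits.zero_comp]
      · intro h
        rw [IsZero.iff_id_eq_zero]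
        have h0 := h a (Set.mem_univ a) 0 ((shiftFunctorZero A ℤ).inv.app a)
        calc 𝟙 a = (shiftFunctorZero A ℤ).inv.app a ≫ (shiftFunctorZero A ℤ).hom.app a := by simp
          _ = 0 := by rw [h0, Limits.zero_comp]
    · intro a₁ _ a₂ _ i
      exact (postcomp_bij _).comp ⟨F.map_injective, F.map_surjective⟩
  · rintro ⟨Ω, hΩ, hbij⟩
    -- the closure of `Ω` under shifts and isomorphisms
    set InΩ' : A → Prop := fun x => ∃ a ∈ Ω, ∃ i : ℤ, Nonempty (x ≅ a⟦i⟧) with hInΩ'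
    have hΩsub : ∀ a ∈ Ω, InΩ' a := fun a ha =>
      ⟨a, ha, 0, ⟨((shiftFunctorZero A ℤ).app a).symm⟩⟩
    have hshift : ∀ x, InΩ' x → ∀ n : ℤ, InΩ' (x⟦n⟧) := by
      rintro x ⟨a, ha, i, ⟨e⟩⟩ n
      exact ⟨a, ha, i + n,
        ⟨(shiftFunctor A n).mapIso e ≪≫ ((shiftFunctorAdd' A i n (i + n) rfl).symm.app a)⟩⟩
    -- `P x y` : `F` is bijective on `Hom(x, y)`
    set P : A → A → Prop :=
      fun x y => Function.Bijective (fun f : x ⟶ y => F.map f) with hP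
    -- iso invariance
    have P_iso : ∀ {x x' y y' : A}, (x' ≅ x) → (y ≅ y') → P x y → P x' y' := by
      intro x x' y y' e₁ e₂ h
      have heq : (fun f : x' ⟶ y' => F.map f) =
          (fun g : F.obj x ⟶ F.obj y => F.map e₁.hom ≫ g ≫ F.map e₂.hom) ∘
          (fun f : x ⟶ y => F.map f) ∘
          (fun f : x' ⟶ y' => e₁.inv ≫ f ≫ e₂.inv) := by
        funext f
        simp only [Function.comp_apply, ← F.map_comp]
        congr 1
        simp
      show Function.Bijective (fun f : x' ⟶ y' => F.map f)
      rw [heq]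
      exact (conj_bij _ _).comp (h.comp (conj_bij _ _))
    -- shift invariance
    have P_shift : ∀ {x y : A} (n : ℤ), P x y → P (x⟦n⟧) (y⟦n⟧) := by
      intro x y n h
      have e : Function.Bijective (fun f : x ⟶ y => (shiftFunctor A n).map f) :=
        ⟨fun _ _ h => (shiftFunctor A n).map_injective h, (shiftFunctor A n).map_surjective⟩
      show Function.Bijective (fun f : x⟦n⟧ ⟶ y⟦n⟧ => F.map f)
      rw [← Function.Bijective.of_comp_iff _ e]
      have heq : (fun f : x⟦n⟧ ⟶ y⟦n⟧ => F.map f) ∘ (fun f : x ⟶ y => (shiftFunctor A n).map f)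
          = (fun g : F.obj x ⟶ F.obj y =>
              (F.commShiftIso n).hom.app x ≫ (shiftFunctor B n).map g ≫
                (F.commShiftIso n).inv.app y) ∘ (fun f : x ⟶ y => F.map f) := by
        funext f
        simp only [Function.comp_apply]
        have := (F.commShiftIso n).hom.naturality f
        dsimp at this ⊢
        rw [← Category.assoc, ← this]
        simp
      rw [heq]
      exact ((conj_bij ((F.commShiftIso n).hom.app x) ((F.commShiftIso n).inv.app y)).comp
        (⟨fun _ _ h => (shiftFunctor B n).map_injective h,
          (shiftFunctor B n).map_surjective⟩ :
            Function.Bijective (fun g : F.obj x ⟶ F.obj y => (shiftFunctor B n).map g))).comp h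
    -- hypothesis gives `P` on `Ω` against shifts
    have hyp : ∀ a₁ ∈ Ω, ∀ a₂ ∈ Ω, ∀ i : ℤ, P a₁ (a₂⟦i⟧) := by
      intro a₁ h₁ a₂ h₂ i
      have h := hbij a₁ h₁ a₂ h₂ i
      have heq : (fun f : a₁ ⟶ a₂⟦i⟧ => F.map f) =
          (fun g : F.obj a₁ ⟶ (F.obj a₂)⟦i⟧ => g ≫ (F.commShiftIso i).inv.app a₂) ∘
          (fun f : a₁ ⟶ a₂⟦i⟧ => F.map f ≫ (F.commShiftIso i).hom.app a₂) := by
        funext f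
        simp
      show Function.Bijective (fun f : a₁ ⟶ a₂⟦i⟧ => F.map f)
      rw [heq]
      exact (postcomp_bij _).comp h
    -- `P` holds on the closure
    have P_closure : ∀ x y, InΩ' x → InΩ' y → P x y := by
      rintro x y ⟨a₁, h₁, i, ⟨e₁⟩⟩ ⟨a₂, h₂, j, ⟨e₂⟩⟩
      have h0 : P a₁ (a₂⟦j - i⟧) := hyp a₁ h₁ a₂ h₂ (j - i)
      have h1 : P (a₁⟦i⟧) ((a₂⟦j - i⟧)⟦i⟧) := P_shift i h0
      refine P_iso e₁ (?_ ≪≫ e₂.symm) h1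
      exact ((shiftFunctorAdd' A (j - i) i j (by ring)).symm.app a₂)
    -- the two adjunctions
    set adj₁ := Adjunction.ofIsRightAdjoint F with hadj₁
    set adj₂ := Adjunction.ofIsLeftAdjoint F with hadj₂
    -- Step 1: the unit of `F ⊣ H` is an isomorphism on the closure
    have step1 : ∀ y, InΩ' y → IsIso (adj₂.unit.app y) := by
      intro y hy
      obtain ⟨c, g, h, hT⟩ := distinguished_cocone_triangle (adj₂.unit.app y)
      set T := Triangle.mk (adj₂.unit.app y) g h with hTdef
      have key : ∀ w, InΩ' w →
          Function.Bijective (fun φ : w ⟶ y => φ ≫ adj₂.unit.app y) := by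
        intro w hw
        have heq : (fun φ : w ⟶ y => φ ≫ adj₂.unit.app y) =
            (adj₂.homEquiv w (F.obj y)) ∘ (fun φ : w ⟶ y => F.map φ) := by
          funext φ
          simp only [Function.comp_apply, Adjunction.homEquiv_unit]
          exact adj₂.unit.naturality φ
        rw [heq]
        exact (adj₂.homEquiv w (F.obj y)).bijective.comp (P_closure w y hw hy)
      have hzero : IsZero c := by
        apply (hΩ c).2
        intro b hb i f
        set e := (shiftEquiv A i).symm.toAdjunction.homEquiv b c with he
        have hef : f = e ((e).symm f) := (Equiv.apply_symm_apply _ _).symm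
        have h0 : (e).symm f = 0 := by
          apply hom_to_obj₃_eq_zero T hT (b⟦(-i : ℤ)⟧)
          · intro φ hφ
            have hbij' := key ((b⟦(-i:ℤ)⟧)⟦(-1:ℤ)⟧) (hshift _ (hshift b (hΩsub b hb) (-i)) (-1))
            apply hbij'.1
            exact (hφ : φ ≫ adj₂.unit.app y = 0).trans Limits.zero_comp.symm
          · intro ψ
            exact (key (b⟦(-i:ℤ)⟧) (hshift b (hΩsub b hb) (-i))).2 ψ
        rw [hef, h0]
        rw [Adjunction.homEquiv_unit]
        simp
        rfl
      have := (Triangle.isZero₃_iff_isIso₁ T hT).1 hzero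
      exact this
    -- Step 2: `F` is bijective on `Hom(x, y)` for arbitrary `x` and `y` in the closure
    have step2 : ∀ x y, InΩ' y → P x y := by
      intro x y hy
      have hiso := step1 y hy
      have heq : (adj₂.homEquiv x (F.obj y)) ∘ (fun φ : x ⟶ y => F.map φ) =
          (fun φ : x ⟶ y => φ ≫ adj₂.unit.app y) := by
        funext φ
        simp only [Function.comp_apply, Adjunction.homEquiv_unit]
        exact (adj₂.unit.naturality φ).symm
      have hb : Function.Bijective
          ((adj₂.homEquiv x (F.obj y)) ∘ (fun φ : x ⟶ y => F.map φ)) := by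
        rw [heq]
        exact postcomp_bij _
      show Function.Bijective (fun f : x ⟶ y => F.map f)
      exact (Function.Bijective.of_comp_iff' (adj₂.homEquiv x (F.obj y)).bijective _).1 hb
    -- the key factorization for the left adjoint
    have factor : ∀ (x y : A) (φ : x ⟶ y),
        adj₁.homEquiv (F.obj x) y (adj₁.counit.app x ≫ φ) = F.map φ := by
      intro x y φ
      rw [Adjunction.homEquiv_naturality_right, Adjunction.homEquiv_unit]
      rw [adj₁.right_triangle_components x]
      simp
    have precomp_counit_bij : ∀ (x y : A), InΩ' y →
        Function.Bijective (fun φ : x ⟶ y => adj₁.counit.app x ≫ φ) := by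
      intro x y hy
      have heq : (adj₁.homEquiv (F.obj x) y) ∘ (fun φ : x ⟶ y => adj₁.counit.app x ≫ φ) =
          (fun φ : x ⟶ y => F.map φ) := by
        funext φ
        exact factor x y φ
      have hb : Function.Bijective
          ((adj₁.homEquiv (F.obj x) y) ∘ (fun φ : x ⟶ y => adj₁.counit.app x ≫ φ)) := by
        rw [heq]
        exact step2 x y hy
      exact (Function.Bijective.of_comp_iff' (adj₁.homEquiv (F.obj x) y).bijective _).1 hb
    -- Step 3: the counit of `G ⊣ F` is an isomorphism everywhere
    have step3 : ∀ x : A, IsIso (adj₁.counit.app x) := by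
      intro x
      obtain ⟨c, g, h, hT⟩ := distinguished_cocone_triangle (adj₁.counit.app x)
      set T := Triangle.mk (adj₁.counit.app x) g h with hTdef
      have hzero : IsZero c := by
        apply (hΩ c).1
        intro b hb i f
        apply hom_from_obj₃_eq_zero T hT (b⟦i⟧)
        · intro φ hφ
          apply (precomp_counit_bij x (b⟦i⟧) (hshift b (hΩsub b hb) i)).1
          exact (hφ : adj₁.counit.app x ≫ φ = 0).trans Limits.comp_zero.symm
        · intro ψ
          exact (precomp_counit_bij x ((b⟦i⟧)⟦(-1:ℤ)⟧)
            (hshift _ (hshift b (hΩsub b hb) i) (-1))).2 ψ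
      exact (Triangle.isZero₃_iff_isIso₁ T hT).1 hzero
    -- conclude full faithfulness
    have hbijAll : ∀ x y : A, Function.Bijective (fun φ : x ⟶ y => F.map φ) := by
      intro x y
      have hiso := step3 x
      have heq : (fun φ : x ⟶ y => F.map φ) =
          (adj₁.homEquiv (F.obj x) y) ∘ (fun φ : x ⟶ y => adj₁.counit.app x ≫ φ) := by
        funext φ
        exact (factor x y φ).symm
      rw [heq]
      exact (adj₁.homEquiv (F.obj x) y).bijective.comp (precomp_bij _)
    exact ⟨⟨fun {x y} => (hbijAll x y).2⟩, ⟨fun {x y} _ _ h => (hbijAll x y).1 h⟩⟩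
end

section
/- Let k be a field and let F : 𝒜 → ℬ be a fully faithful exact functor (commuting with the shift and sending distinguished triangles to distinguished triangles) between k-linear pretriangulated categories with finite-dimensional Hom spaces, and suppose F admits a left adjoint. Let S_𝒜 and S_ℬ be Serre functors on 𝒜 and ℬ respectively. Assume that 𝒜 contains a nonzero object and that ℬ is indecomposable. Suppose there is a spanning class Ω for 𝒜 such that F(S_𝒜(ω)) ≅ S_ℬ(F(ω)) for every ω ∈ Ω. Then F is an equivalence of categories. -/
open CategoryTheory Limits

universe v₁ v₂ u₁ u₂ u

/-- A Serre functor on a `k`-linear category with finite-dimensional Hom spaces: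
an equivalence `functor : C ⥤ C` together with isomorphisms
`Hom(X, Y) ≅ (Hom(Y, S X))*`, natural in `X` and `Y`. -/
structure SerreFunctor (k : Type u) [Field k] (C : Type u₁) [Category.{v₁} C]
    [Preadditive C] [Linear k C] where
  functor : C ⥤ C
  isEquivalence : functor.IsEquivalence
  pairing : ∀ X Y : C, (X ⟶ Y) ≃ₗ[k] Module.Dual k (Y ⟶ functor.obj X)
  nat_right : ∀ {X Y Y' : C} (f : X ⟶ Y) (g : Y ⟶ Y') (h : Y' ⟶ functor.obj X),
    pairing X Y' (f ≫ g) h = pairing X Y f (g ≫ h)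
  nat_left : ∀ {X X' Y : C} (u : X' ⟶ X) (f : X ⟶ Y) (h : Y ⟶ functor.obj X'),
    pairing X' Y (u ≫ f) h = pairing X Y f (h ≫ functor.map u)

/-- A pretriangulated category is decomposable if it is the direct sum of two non-trivial
full subcategories closed under the shift which are mutually orthogonal. -/
def IsDecomposable (C : Type u₁) [Category.{v₁} C] [Preadditive C] [HasShift C ℤ] : Prop :=
  ∃ P₁ P₂ : Set C,
    (∃ b ∈ P₁, ¬ IsZero b) ∧ (∃ b ∈ P₂, ¬ IsZero b) ∧
    (∀ b ∈ P₁, ∀ i : ℤ, b⟦i⟧ ∈ P₁) ∧ (∀ b ∈ P₂, ∀ i : ℤ, b⟦i⟧ ∈ P₂) ∧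
    (∀ b : C, ∃ b₁ ∈ P₁, ∃ b₂ ∈ P₂,
      ∃ (i₁ : b₁ ⟶ b) (i₂ : b₂ ⟶ b) (p₁ : b ⟶ b₁) (p₂ : b ⟶ b₂),
        i₁ ≫ p₁ = 𝟙 b₁ ∧ i₂ ≫ p₂ = 𝟙 b₂ ∧ i₁ ≫ p₂ = 0 ∧ i₂ ≫ p₁ = 0 ∧
        p₁ ≫ i₁ + p₂ ≫ i₂ = 𝟙 b) ∧
    (∀ b₁ ∈ P₁, ∀ b₂ ∈ P₂, (∀ f : b₁ ⟶ b₂, f = 0) ∧ (∀ g : b₂ ⟶ b₁, g = 0))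

namespace BridgelandAux

open CategoryTheory Limits Pretriangulated

section Triv

variable {C : Type*} [Category C] [Preadditive C] {D : Type*} [Category D] [Preadditive D]

/-- The hom space from `x` to `y` is trivial. -/
def Triv (x y : C) : Prop := ∀ f : x ⟶ y, f = 0

lemma Triv.of_equiv {x y : C} {x' y' : D} (h : Triv x y) (e : (x ⟶ y) ≃ (x' ⟶ y')) :
    Triv x' y' := fun f => e.symm.injective ((h _).trans (h _).symm)

lemma Triv.of_iso {x y x' y' : C} (h : Triv x y) (e₁ : x ≅ x') (e₂ : y ≅ y') :
    Triv x' y' := h.of_equiv (Iso.homCongr e₁ e₂)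

end Triv

section Serre

variable {k : Type u} [Field k] {C : Type*} [Category C] [Preadditive C] [Linear k C]

lemma serre_one (S : SerreFunctor k C) (X Y : C) (h : Triv X Y) :
    Triv Y (S.functor.obj X) := fun g => by
  rw [← Module.forall_dual_apply_eq_zero_iff k g]
  intro ξ
  obtain ⟨f, rfl⟩ := (S.pairing X Y).surjective ξ
  rw [h f, map_zero]
  rfl

lemma serre_two (S : SerreFunctor k C) (X Y : C) (h : Triv Y (S.functor.obj X)) :
    Triv X Y := fun f => by
  have h0 : S.pairing X Y f = 0 := by
    apply LinearMap.ext
    intro g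
    rw [h g]
    simp
  exact (S.pairing X Y).injective (by rw [h0, map_zero])

end Serre

section Shift

variable {C : Type*} [Category C] [HasShift C ℤ]

/-- Adjunction between shifting by `i` and shifting by `j` when `i + j = 0`. -/
noncomputable def shEquiv (i j : ℤ) (h : i + j = 0) (x y : C) :
    (x⟦i⟧ ⟶ y) ≃ (x ⟶ y⟦j⟧) :=
  (shiftEquiv' C i j h).toAdjunction.homEquiv x y

end Shift

section Main

variable {k : Type u} [Field k]
variable {A : Type u₁} {B : Type u₂} [Category.{v₁} A] [Category.{v₂} B]
  [Preadditive A] [Preadditive B] [Linear k A] [Linear k B]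
  [HasShift A ℤ] [HasShift B ℤ]

/-- Key vanishing lemma: an object right-orthogonal to the image of the spanning class
is right-orthogonal to the whole image. -/
lemma lemmaA [HasZeroObject B] (F : A ⥤ B) [F.CommShift ℤ] {G : B ⥤ A} (adj : G ⊣ F)
    (SB : SerreFunctor k B) (Ω : Set A) (hΩ : SpanningClass Ω)
    (d : B) (h : ∀ ω ∈ Ω, ∀ i : ℤ, Triv (F.obj ω) (d⟦i⟧)) (a : A) :
    Triv (F.obj a) d := by
  haveI := SB.isEquivalence
  set Xd := SB.functor.objPreimage d with hXdDef
  have cIso : SB.functor.obj Xd ≅ d := SB.functor.objObjPreimageIso d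
  have step1 : ∀ ω ∈ Ω, ∀ i : ℤ, Triv ((F.obj ω)⟦i⟧) d := fun ω hω i =>
    (h ω hω (-i)).of_equiv (shEquiv i (-i) (add_neg_cancel i) (F.obj ω) d).symm
  have step2 : ∀ ω ∈ Ω, ∀ i : ℤ, Triv Xd ((F.obj ω)⟦i⟧) := fun ω hω i =>
    serre_two SB Xd _ ((step1 ω hω i).of_iso (Iso.refl _) cIso.symm)
  have step3 : ∀ ω ∈ Ω, ∀ i : ℤ, Triv (G.obj Xd) (ω⟦i⟧) := by
    intro ω hω i
    have t1 : Triv Xd (F.obj (ω⟦i⟧)) :=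
      (step2 ω hω i).of_iso (Iso.refl _) ((F.commShiftIso i).app ω).symm
    exact t1.of_equiv (adj.homEquiv Xd (ω⟦i⟧)).symm
  have step4 : IsZero (G.obj Xd) := (hΩ (G.obj Xd)).1 (fun ω hω i f => step3 ω hω i f)
  have t0 : Triv (G.obj Xd) a := fun u => step4.eq_of_src u 0
  have step5 : Triv Xd (F.obj a) := t0.of_equiv (adj.homEquiv Xd a)
  exact (serre_one SB Xd (F.obj a) step5).of_iso (Iso.refl _) cIso

/-- The cone of the unit of the adjunction is left-orthogonal to the image of `F`. -/
lemma coneTriv [HasZeroObject B] [∀ n : ℤ, (shiftFunctor B n).Additive] [Pretriangulated B]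
    (F : A ⥤ B) [F.CommShift ℤ] [F.Full] [F.Faithful] [F.Additive]
    {G : B ⥤ A} (adj : G ⊣ F) (b : B) {Z : B}
    (g : F.obj (G.obj b) ⟶ Z) (δ : Z ⟶ b⟦(1:ℤ)⟧)
    (hT : Triangle.mk (adj.unit.app b) g δ ∈ distTriang B) (a : A) :
    Triv Z (F.obj a) := by
  intro φ
  have hhe : ∀ (X : B) (Y : A) (f : G.obj X ⟶ Y),
      adj.homEquiv X Y f = adj.unit.app X ≫ F.map f := fun X Y f => adj.homEquiv_unit X Y f
  have hηg : adj.unit.app b ≫ g = 0 := comp_distTriang_mor_zero₁₂ _ hT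
  have hgφ : g ≫ φ = 0 := by
    have hu : F.map (F.preimage (g ≫ φ)) = g ≫ φ := F.map_preimage _
    have h0 : adj.homEquiv b a (F.preimage (g ≫ φ)) = 0 := by
      rw [hhe, hu, ← Category.assoc, hηg, zero_comp]
    have h1 : F.preimage (g ≫ φ) = 0 := by
      apply (adj.homEquiv b a).injective
      rw [h0, hhe, F.map_zero, comp_zero]
    rw [← hu, h1, F.map_zero]
  obtain ⟨ρ, hρ⟩ := Triangle.yoneda_exact₃ _ hT φ hgφ
  simp only [Triangle.mk_mor₃] at hρ
  set sh : shiftFunctor B (1:ℤ) ⊣ shiftFunctor B (-1:ℤ) := (shiftEquiv B (1:ℤ)).toAdjunction with hsh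
  set e := (F.commShiftIso (-1:ℤ)).app a with he
  set v := (adj.homEquiv b (a⟦(-1:ℤ)⟧)).symm ((sh.homEquiv b (F.obj a)) ρ ≫ e.inv) with hv
  have hρ' : (sh.homEquiv b (F.obj a)) ρ = adj.unit.app b ≫ (F.map v ≫ e.hom) := by
    have h2 : adj.unit.app b ≫ F.map v = (sh.homEquiv b (F.obj a)) ρ ≫ e.inv := by
      rw [← hhe, hv, Equiv.apply_symm_apply]
    rw [← Category.assoc, h2, Category.assoc, Iso.inv_hom_id, Category.comp_id]
  have hρ2 : ρ = (shiftFunctor B (1:ℤ)).map (adj.unit.app b) ≫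
      (sh.homEquiv (F.obj (G.obj b)) (F.obj a)).symm (F.map v ≫ e.hom) := by
    have h4 : ρ = (sh.homEquiv b (F.obj a)).symm (adj.unit.app b ≫ (F.map v ≫ e.hom)) := by
      rw [← hρ']
      exact ((sh.homEquiv b (F.obj a)).symm_apply_apply ρ).symm
    rw [h4]
    exact sh.homEquiv_naturality_left_symm _ _
  have h3 : δ ≫ (shiftFunctor B (1:ℤ)).map (adj.unit.app b) = 0 :=
    comp_distTriang_mor_zero₃₁ _ hT
  rw [hρ, hρ2]
  exact (Category.assoc _ _ _).symm.trans ((congrArg (· ≫ _) h3).trans zero_comp)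

end Main

end BridgelandAux

open BridgelandAux Pretriangulated

/-- A fully faithful exact functor between pretriangulated categories with Serre functors,
possessing a left adjoint, whose source is non-trivial and whose target is indecomposable,
and which intertwines the Serre functors on a spanning class, is an equivalence. -/
theorem bridgeland_equivalence_criterion {k : Type u} [Field k]
    {A : Type u₁} {B : Type u₂} [Category.{v₁} A] [Category.{v₂} B]
    [Preadditive A] [Preadditive B] [Linear k A] [Linear k B]
    [HasShift A ℤ] [HasShift B ℤ] [HasZeroObject A] [HasZeroObject B]
    [∀ n : ℤ, (shiftFunctor A n).Additive] [∀ n : ℤ, (shiftFunctor B n).Additive]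
    [Pretriangulated A] [Pretriangulated B]
    [∀ X Y : A, FiniteDimensional k (X ⟶ Y)] [∀ X Y : B, FiniteDimensional k (X ⟶ Y)]
    (F : A ⥤ B) [F.CommShift ℤ] [F.IsTriangulated] [F.Full] [F.Faithful]
    [F.IsRightAdjoint]
    (SA : SerreFunctor k A) (SB : SerreFunctor k B)
    (hA : ∃ a : A, ¬ IsZero a)
    (hB₁ : ∃ b : B, ¬ IsZero b) (hB₂ : ¬ IsDecomposable B)
    (Ω : Set A) (hΩ : SpanningClass Ω)
    (hcomm : ∀ ω ∈ Ω, Nonempty (F.obj (SA.functor.obj ω) ≅ SB.functor.obj (F.obj ω))) :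
    F.IsEquivalence := by
  classical
  obtain ⟨a₀, ha₀⟩ := hA
  set G := F.leftAdjoint with hGdef
  let adj : G ⊣ F := Adjunction.ofIsRightAdjoint F
  -- choose cones of the unit maps
  have hcone : ∀ b : B, ∃ (Z : B) (g : F.obj (G.obj b) ⟶ Z) (δ : Z ⟶ b⟦(1:ℤ)⟧),
      Triangle.mk (adj.unit.app b) g δ ∈ distTriang B := fun b =>
    Pretriangulated.distinguished_cocone_triangle (adj.unit.app b)
  choose Z gm δm hdist using hcone
  -- orthogonality facts
  have trivZFplain : ∀ (b : B) (a : A), Triv (Z b) (F.obj a) := fun b a =>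
    coneTriv F adj b (gm b) (δm b) (hdist b) a
  have trivZF : ∀ (b : B) (j : ℤ) (a : A), Triv ((Z b)⟦j⟧) (F.obj a) := fun b j a =>
    ((trivZFplain b (a⟦(-j : ℤ)⟧)).of_iso (Iso.refl _) ((F.commShiftIso (-j)).app a)).of_equiv
      (shEquiv j (-j) (add_neg_cancel j) (Z b) (F.obj a)).symm
  have trivFωZ : ∀ (b : B), ∀ ω ∈ Ω, ∀ i : ℤ, Triv (F.obj ω) ((Z b)⟦i⟧) := fun b ω hω i =>
    serre_two SB (F.obj ω) ((Z b)⟦i⟧)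
      ((trivZF b i (SA.functor.obj ω)).of_iso (Iso.refl _) (hcomm ω hω).some)
  have trivFZ : ∀ (b : B) (a : A) (i : ℤ), Triv (F.obj a) ((Z b)⟦i⟧) := fun b a i =>
    lemmaA F adj SB Ω hΩ ((Z b)⟦i⟧)
      (fun ω hω j => (trivFωZ b ω hω (i + j)).of_iso (Iso.refl _)
        ((shiftFunctorAdd' B i j (i + j) rfl).app (Z b))) a
  have trivFZplain : ∀ (b : B) (a : A), Triv (F.obj a) (Z b) := fun b a =>
    (trivFZ b a 0).of_iso (Iso.refl _) ((shiftFunctorZero B ℤ).app (Z b))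
  -- splitting of each object
  have split : ∀ b : B, ∃ (w : (Z b)⟦(-1:ℤ)⟧ ⟶ b) (s : F.obj (G.obj b) ⟶ b)
      (p : b ⟶ (Z b)⟦(-1:ℤ)⟧),
      w ≫ p = 𝟙 ((Z b)⟦(-1:ℤ)⟧) ∧ s ≫ adj.unit.app b = 𝟙 (F.obj (G.obj b)) ∧
      w ≫ adj.unit.app b = 0 ∧ s ≫ p = 0 ∧
      p ≫ w + (adj.unit.app b ≫ s : b ⟶ b) = 𝟙 b := by
    intro b
    set T := Triangle.mk (adj.unit.app b) (gm b) (δm b) with hTdef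
    have hT : T ∈ distTriang B := hdist b
    set T' := T.invRotate with hT'def
    have hT' : T' ∈ distTriang B := inv_rot_of_distTriang T hT
    have hδ' : T'.mor₃ = 0 := by
      have ht : Triv (F.obj (G.obj b)) (((Z b)⟦(-1:ℤ)⟧)⟦(1:ℤ)⟧) :=
        (trivFZplain b (G.obj b)).of_iso (Iso.refl _)
          ((shiftFunctorCompIsoId B (-1 : ℤ) (1 : ℤ) (by omega)).app (Z b)).symm
      exact ht T'.mor₃
    obtain ⟨s, hs⟩ := Triangle.coyoneda_exact₃ T' hT' (𝟙 T'.obj₃)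
      (by rw [Category.id_comp, hδ'])
    set q : T'.obj₂ ⟶ T'.obj₂ := 𝟙 T'.obj₂ - T'.mor₂ ≫ s with hq
    have hqm : q ≫ T'.mor₂ = 0 := by
      rw [hq, Preadditive.sub_comp, Category.id_comp, Category.assoc, ← hs,
        Category.comp_id, sub_self]
    obtain ⟨p, hp⟩ := Triangle.coyoneda_exact₂ T' hT' q hqm
    have hwη : T'.mor₁ ≫ T'.mor₂ = 0 := comp_distTriang_mor_zero₁₂ T' hT'
    have hwq : T'.mor₁ ≫ q = T'.mor₁ := by
      rw [hq, Preadditive.comp_sub, Category.comp_id, ← Category.assoc, hwη, zero_comp,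
        sub_zero]
    have hwpw : (T'.mor₁ ≫ p - 𝟙 T'.obj₁) ≫ T'.mor₁ = 0 := by
      rw [Preadditive.sub_comp, Category.id_comp, Category.assoc, ← hp, hwq, sub_self]
    have hwp : T'.mor₁ ≫ p = 𝟙 T'.obj₁ := by
      set T'' := T'.invRotate with hT''def
      have hT'' : T'' ∈ distTriang B := inv_rot_of_distTriang T' hT'
      obtain ⟨g', hg'⟩ := Triangle.coyoneda_exact₂ T'' hT'' (T'.mor₁ ≫ p - 𝟙 T'.obj₁) hwpw
      have hg0 : g' = 0 := by
        have ht : Triv ((Z b)⟦(-1:ℤ)⟧) ((F.obj (G.obj b))⟦(-1:ℤ)⟧) :=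
          (trivZF b (-1) ((G.obj b)⟦(-1:ℤ)⟧)).of_iso (Iso.refl _)
            ((F.commShiftIso (-1:ℤ)).app (G.obj b))
        exact ht g'
      have hzero : T'.mor₁ ≫ p - 𝟙 T'.obj₁ = 0 := by
        rw [hg', hg0, zero_comp]
        rfl
      rwa [sub_eq_zero] at hzero
    have hsp : s ≫ p = 0 := trivFZ b (G.obj b) (-1) (s ≫ p)
    have hsum : p ≫ T'.mor₁ + T'.mor₂ ≫ s = 𝟙 T'.obj₂ := by
      rw [← hp, hq]
      abel
    exact ⟨T'.mor₁, s, p, hwp, hs.symm, hwη, hsp, hsum⟩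
  by_cases hall : ∀ b : B, IsZero (Z b)
  · -- all cones vanish: `F` is essentially surjective
    haveI hES : F.EssSurj := by
      constructor
      intro b
      obtain ⟨w, s, p, hwp, hsη, hwη, hsp, hsum⟩ := split b
      have hz : IsZero ((Z b)⟦(-1:ℤ)⟧) := (shiftFunctor B (-1:ℤ)).map_isZero (hall b)
      have hp0 : p = 0 := hz.eq_of_tgt p 0
      have hηs : (adj.unit.app b ≫ s : b ⟶ b) = 𝟙 b := by
        rw [hp0, zero_comp, zero_add] at hsum
        exact hsum
      exact ⟨G.obj b, ⟨Iso.mk s (adj.unit.app b) hsη hηs⟩⟩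
    exact { essSurj := hES }
  · -- otherwise `B` would be decomposable
    push_neg at hall
    obtain ⟨b₀, hb₀⟩ := hall
    exfalso
    apply hB₂
    refine ⟨{x : B | ∃ a : A, Nonempty (x ≅ F.obj a)},
            {y : B | ∀ a : A, (∀ f : F.obj a ⟶ y, f = 0) ∧ (∀ g : y ⟶ F.obj a, g = 0)},
            ⟨F.obj a₀, ⟨a₀, ⟨Iso.refl _⟩⟩, ?_⟩,
            ⟨Z b₀, fun a => ⟨fun f => trivFZplain b₀ a f, fun g => trivZFplain b₀ a g⟩, hb₀⟩,
            ?_, ?_, ?_, ?_⟩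
    · -- `F.obj a₀` is not zero
      intro h
      apply ha₀
      rw [IsZero.iff_id_eq_zero] at h ⊢
      apply F.map_injective
      rw [F.map_id, F.map_zero, ← h]
    · -- first class is closed under shifts
      rintro x ⟨a, ⟨e⟩⟩ i
      exact ⟨a⟦i⟧, ⟨((shiftFunctor B i).mapIso e).trans ((F.commShiftIso i).app a).symm⟩⟩
    · -- second class is closed under shifts
      rintro y hy i a
      constructor
      · intro f
        have t1 : Triv (F.obj (a⟦(-i : ℤ)⟧)) y := fun f' => (hy (a⟦(-i : ℤ)⟧)).1 f'
        exact ((t1.of_iso ((F.commShiftIso (-i)).app a) (Iso.refl _)).of_equiv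
          (shEquiv (-i) i (neg_add_cancel i) (F.obj a) y)) f
      · intro gg
        have t1 : Triv y (F.obj (a⟦(-i : ℤ)⟧)) := fun g' => (hy (a⟦(-i : ℤ)⟧)).2 g'
        exact ((t1.of_iso (Iso.refl _) ((F.commShiftIso (-i)).app a)).of_equiv
          (shEquiv i (-i) (add_neg_cancel i) y (F.obj a)).symm) gg
    · -- every object splits
      intro b
      obtain ⟨w, s, p, hwp, hsη, hwη, hsp, hsum⟩ := split b
      refine ⟨F.obj (G.obj b), ⟨G.obj b, ⟨Iso.refl _⟩⟩, (Z b)⟦(-1:ℤ)⟧,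
        fun a => ⟨fun f => trivFZ b a (-1) f, fun g => trivZF b (-1) a g⟩,
        s, w, adj.unit.app b, p, hsη, hwp, hsp, hwη, ?_⟩
      rw [add_comm]
      exact hsum
    · -- orthogonality
      rintro x ⟨a, ⟨e⟩⟩ y hy
      exact ⟨fun f => Triv.of_iso (fun f' => (hy a).1 f') e.symm (Iso.refl _) f,
             fun g => Triv.of_iso (fun g' => (hy a).2 g') (Iso.refl _) e.symm g⟩
end

section
/- Let (R, 𝔪) be a commutative Noetherian local ring with residue field k = R/𝔪, let m be an integer, and let P be a bounded-above cochain complex of finitely generated free R-modules such that H^i(P ⊗_R k) = 0 for all i > m. Then H^i(P) = 0 for all i > m. -/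
open CategoryTheory Limits MonoidalCategory

universe u

section Aux

variable {R : Type u} [CommRing R]

lemma aux_tmul_one_surj (I : Ideal R) {M : Type u} [AddCommGroup M] [Module R M]
    (t : TensorProduct R M (R ⧸ I)) : ∃ m : M, t = m ⊗ₜ[R] (1 : R ⧸ I) := by
  induction t using TensorProduct.induction_on with
  | zero => exact ⟨0, by simp⟩
  | tmul m c =>
    obtain ⟨r, rfl⟩ := Ideal.Quotient.mk_surjective c
    refine ⟨r • m, ?_⟩
    rw [TensorProduct.smul_tmul]
    congr 1
    rw [show (1 : R ⧸ I) = Submodule.Quotient.mk (1 : R) from rfl, ← Submodule.Quotient.mk_smul,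
      smul_eq_mul, mul_one]
    rfl
  | add x y hx hy =>
    obtain ⟨a, rfl⟩ := hx; obtain ⟨b, rfl⟩ := hy
    exact ⟨a + b, (TensorProduct.add_tmul a b 1).symm⟩

lemma aux_tmul_one_zero (I : Ideal R) {M : Type u} [AddCommGroup M] [Module R M]
    {m : M} (h : m ⊗ₜ[R] (1 : R ⧸ I) = 0) : m ∈ I • (⊤ : Submodule R M) := by
  have h2 := congrArg (TensorProduct.tensorQuotEquivQuotSMul M I) h
  rw [show (1 : R ⧸ I) = Ideal.Quotient.mk I 1 from rfl,
    TensorProduct.tensorQuotEquivQuotSMul_tmul_mk, map_zero] at h2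
  simpa [Submodule.Quotient.mk_eq_zero] using h2

/-- The inductive invariant: the complex is exact at `i` and the kernel of the `i`-th
differential is a direct summand (witnessed by a linear retraction). -/
def GoodAt (P : CochainComplex (ModuleCat.{u} R) ℤ) (i : ℤ) : Prop :=
  P.ExactAt i ∧ ∃ r : P.X i →ₗ[R] P.X i,
    (∀ x, P.d i (i + 1) (r x) = 0) ∧ (∀ x, P.d i (i + 1) x = 0 → r x = x)

lemma baseAux (P : CochainComplex (ModuleCat.{u} R) ℤ) (i : ℤ)
    (h0 : IsZero (P.X i)) : GoodAt P i := by
  have hz : ∀ x : P.X i, x = 0 := by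
    intro x
    have h : (𝟙 (P.X i) : P.X i ⟶ P.X i) = 0 := h0.eq_of_src _ _
    calc x = (𝟙 (P.X i) : P.X i ⟶ P.X i) x := rfl
      _ = (0 : P.X i ⟶ P.X i) x := by rw [h]
      _ = 0 := rfl
  constructor
  · rw [P.exactAt_iff' (i - 1) i (i + 1)
        ((ComplexShape.up ℤ).prev_eq' (show (ComplexShape.up ℤ).Rel (i - 1) i by
          rw [ComplexShape.up_Rel]; omega))
        ((ComplexShape.up ℤ).next_eq' rfl),
      ShortComplex.moduleCat_exact_iff]
    intro x _
    exact ⟨0, by rw [map_zero]; exact (hz x).symm⟩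
  · exact ⟨LinearMap.id, fun x => by rw [hz (LinearMap.id x), map_zero],
      fun x _ => rfl⟩

lemma stepAux {R : Type u} [CommRing R] [IsNoetherianRing R] [IsLocalRing R]
    (P : CochainComplex (ModuleCat.{u} R) ℤ) (i : ℤ)
    (hfree : Module.Free R (P.X (i + 1))) (hfg : Module.Finite R (P.X i))
    (hQ : (((tensorRight (ModuleCat.of R (IsLocalRing.ResidueField R))).mapHomologicalComplex
        (ComplexShape.up ℤ)).obj P).ExactAt i)
    (hnext : GoodAt P (i + 1)) : GoodAt P i := by
  obtain ⟨hex, r', hr'mem, hr'id⟩ := hnext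
  have hdd : ∀ (a b c : ℤ) (x : P.X a), P.d b c (P.d a b x) = 0 :=
    fun a b c x => congrArg (fun f => ModuleCat.Hom.hom f x) (P.d_comp_d a b c)
  -- concrete exactness at i+1
  have hsurj : ∀ z : P.X (i + 1), P.d (i + 1) (i + 1 + 1) z = 0 →
      ∃ y : P.X i, P.d i (i + 1) y = z := by
    have h1 := (P.exactAt_iff' i (i + 1) (i + 1 + 1)
      ((ComplexShape.up ℤ).prev_eq' (show (ComplexShape.up ℤ).Rel i (i + 1) by
        rw [ComplexShape.up_Rel]))
      ((ComplexShape.up ℤ).next_eq' (show (ComplexShape.up ℤ).Rel (i + 1) (i + 1 + 1) by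
        rw [ComplexShape.up_Rel]))).mp hex
    rw [ShortComplex.moduleCat_exact_iff] at h1
    exact fun z hz => h1 z hz
  -- the kernel of d^{i+1} is projective
  haveI := hfree
  have hproj : Module.Projective R (LinearMap.ker (P.d (i + 1) (i + 1 + 1)).hom) := by
    refine Module.Projective.of_split (LinearMap.ker (P.d (i + 1) (i + 1 + 1)).hom).subtype
      (r'.codRestrict _ fun x => LinearMap.mem_ker.mpr (hr'mem x)) ?_
    apply LinearMap.ext
    rintro ⟨z, hz⟩
    exact Subtype.ext (hr'id z (LinearMap.mem_ker.mp hz))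
  -- a section of d^i : P.X i → ker d^{i+1}
  let f : P.X i →ₗ[R] LinearMap.ker (P.d (i + 1) (i + 1 + 1)).hom :=
    LinearMap.codRestrict _ (P.d i (i + 1)).hom fun x => LinearMap.mem_ker.mpr (hdd _ _ _ x)
  have hfsurj : Function.Surjective f := by
    rintro ⟨z, hz⟩
    obtain ⟨y, hy⟩ := hsurj z (LinearMap.mem_ker.mp hz)
    exact ⟨y, Subtype.ext hy⟩
  obtain ⟨s, hs⟩ := Module.projective_lifting_property f LinearMap.id hfsurj
  have hds : ∀ z : LinearMap.ker (P.d (i + 1) (i + 1 + 1)).hom, P.d i (i + 1) (s z) = ↑z :=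
    fun z => congrArg Subtype.val (DFunLike.congr_fun hs z)
  -- the retraction onto ker d^i
  let rr : P.X i →ₗ[R] P.X i := LinearMap.id - s.comp f
  have hrrval : ∀ x : P.X i, rr x = x - s (f x) := fun _ => rfl
  have hrrmem : ∀ x, P.d i (i + 1) (rr x) = 0 := by
    intro x
    rw [hrrval, map_sub, hds (f x)]
    show P.d i (i + 1) x - P.d i (i + 1) x = 0
    exact sub_self _
  have hrrid : ∀ x, P.d i (i + 1) x = 0 → rr x = x := by
    intro x hx
    rw [hrrval, show f x = 0 from Subtype.ext hx, map_zero, sub_zero]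
  -- concrete exactness of the tensored complex at i
  set k := ModuleCat.of R (IsLocalRing.ResidueField R) with hk
  set Q := ((tensorRight k).mapHomologicalComplex (ComplexShape.up ℤ)).obj P with hQdef
  have hQsurj : ∀ ξ : Q.X i, Q.d i (i + 1) ξ = 0 → ∃ η : Q.X (i - 1), Q.d (i - 1) i η = ξ := by
    have h1 := (Q.exactAt_iff' (i - 1) i (i + 1)
      ((ComplexShape.up ℤ).prev_eq' (show (ComplexShape.up ℤ).Rel (i - 1) i by
        rw [ComplexShape.up_Rel]; omega))
      ((ComplexShape.up ℤ).next_eq' (show (ComplexShape.up ℤ).Rel i (i + 1) by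
        rw [ComplexShape.up_Rel]))).mp hQ
    rw [ShortComplex.moduleCat_exact_iff] at h1
    exact fun ξ hξ => h1 ξ hξ
  have hQd : ∀ (a b : ℤ) (u : P.X a),
      Q.d a b ((u ⊗ₜ[R] (1 : IsLocalRing.ResidueField R) :
          TensorProduct R (P.X a) (IsLocalRing.ResidueField R)) : Q.X a)
        = ((P.d a b u ⊗ₜ[R] (1 : IsLocalRing.ResidueField R) :
          TensorProduct R (P.X b) (IsLocalRing.ResidueField R)) : Q.X b) := by
    intro a b u
    rfl
  -- Nakayama input
  have hmem : ∀ x : P.X i, P.d i (i + 1) x = 0 →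
      ∃ y : P.X (i - 1), x - P.d (i - 1) i y ∈
        (IsLocalRing.maximalIdeal R) • (⊤ : Submodule R (P.X i)) := by
    intro x hx
    have hξ : Q.d i (i + 1) ((x ⊗ₜ[R] (1 : IsLocalRing.ResidueField R) :
        TensorProduct R (P.X i) (IsLocalRing.ResidueField R)) : Q.X i) = 0 := by
      rw [hQd]
      show (P.d i (i + 1) x ⊗ₜ[R] (1 : IsLocalRing.ResidueField R) :
        TensorProduct R (P.X (i + 1)) (IsLocalRing.ResidueField R)) = 0
      rw [hx, TensorProduct.zero_tmul]
    obtain ⟨η, hη⟩ := hQsurj _ hξ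
    obtain ⟨y, rfl⟩ := aux_tmul_one_surj (IsLocalRing.maximalIdeal R)
      (η : TensorProduct R (P.X (i - 1)) (IsLocalRing.ResidueField R))
    replace hη := (hQd (i - 1) i y).symm.trans hη
    refine ⟨y, aux_tmul_one_zero (IsLocalRing.maximalIdeal R) ?_⟩
    have hη' : (P.d (i - 1) i y ⊗ₜ[R] (1 : IsLocalRing.ResidueField R) :
        TensorProduct R (P.X i) (IsLocalRing.ResidueField R))
        = x ⊗ₜ[R] (1 : IsLocalRing.ResidueField R) := hη
    rw [TensorProduct.sub_tmul, sub_eq_zero]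
    exact hη'.symm
  -- Nakayama
  have hsub : LinearMap.ker (P.d i (i + 1)).hom ≤ LinearMap.range (P.d (i - 1) i).hom := by
    set A := LinearMap.range (P.d (i - 1) i).hom with hA
    set KK := LinearMap.ker (P.d i (i + 1)).hom with hKK
    have hAK : A ≤ KK := by
      rintro _ ⟨y, rfl⟩
      exact LinearMap.mem_ker.mpr (hdd _ _ _ y)
    have hKfg : KK.FG := by
      haveI := hfg
      haveI : IsNoetherian R (P.X i) := isNoetherian_of_isNoetherianRing_of_finite R _
      exact IsNoetherian.noetherian _
    set NN := KK.map A.mkQ with hNN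
    have hmaprr : Submodule.map rr ⊤ ≤ KK := by
      rintro _ ⟨w, -, rfl⟩
      exact LinearMap.mem_ker.mpr (hrrmem w)
    have hNle : NN ≤ (IsLocalRing.maximalIdeal R) • NN := by
      rintro _ ⟨z, hz, rfl⟩
      obtain ⟨y, hy⟩ := hmem z (LinearMap.mem_ker.mp hz)
      have hzK : z - P.d (i - 1) i y ∈ KK := sub_mem hz (hAK ⟨y, rfl⟩)
      have hcap : z - P.d (i - 1) i y ∈ (IsLocalRing.maximalIdeal R) • KK := by
        have h2 : rr (z - P.d (i - 1) i y) ∈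
            Submodule.map rr ((IsLocalRing.maximalIdeal R) • (⊤ : Submodule R (P.X i))) :=
          Submodule.mem_map_of_mem hy
        rw [Submodule.map_smul''] at h2
        rw [hrrid _ (LinearMap.mem_ker.mp hzK)] at h2
        exact Submodule.smul_mono le_rfl hmaprr h2
      have hπ : A.mkQ z = A.mkQ (z - P.d (i - 1) i y) := by
        rw [map_sub, show A.mkQ (P.d (i - 1) i y) = 0 from
          (Submodule.Quotient.mk_eq_zero _).mpr ⟨y, rfl⟩, sub_zero]
      rw [hπ]
      have h3 : A.mkQ (z - P.d (i - 1) i y) ∈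
          Submodule.map A.mkQ ((IsLocalRing.maximalIdeal R) • KK) :=
        Submodule.mem_map_of_mem hcap
      rwa [Submodule.map_smul''] at h3
    have hNbot : NN = ⊥ :=
      Submodule.eq_bot_of_le_smul_of_le_jacobson_bot (IsLocalRing.maximalIdeal R) NN
        (hKfg.map A.mkQ) hNle
        (by rw [IsLocalRing.jacobson_eq_maximalIdeal ⊥ bot_ne_top])
    intro z hz
    have h4 : A.mkQ z = 0 := by
      have : A.mkQ z ∈ NN := Submodule.mem_map_of_mem hz
      rwa [hNbot, Submodule.mem_bot] at this
    have h5 : z ∈ LinearMap.ker A.mkQ := LinearMap.mem_ker.mpr h4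
    rwa [Submodule.ker_mkQ] at h5
  constructor
  · rw [P.exactAt_iff' (i - 1) i (i + 1)
      ((ComplexShape.up ℤ).prev_eq' (show (ComplexShape.up ℤ).Rel (i - 1) i by
        rw [ComplexShape.up_Rel]; omega))
      ((ComplexShape.up ℤ).next_eq' (show (ComplexShape.up ℤ).Rel i (i + 1) by
        rw [ComplexShape.up_Rel])),
      ShortComplex.moduleCat_exact_iff]
    intro x hx
    exact hsub (LinearMap.mem_ker.mpr hx)
  · exact ⟨rr, hrrmem, hrrid⟩

end Aux

/-- Nakayama-type vanishing: if `P` is a bounded-above cochain complex of finitely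
generated free modules over a commutative Noetherian local ring `R` with residue field
`k`, and `H^i(P ⊗_R k) = 0` for all `i > m`, then `H^i(P) = 0` for all `i > m`. -/
theorem cohomology_vanishing_of_fiber_vanishing
    {R : Type u} [CommRing R] [IsNoetherianRing R] [IsLocalRing R]
    (m : ℤ) (P : CochainComplex (ModuleCat.{u} R) ℤ)
    (hfree : ∀ i : ℤ, Module.Free R (P.X i))
    (hfg : ∀ i : ℤ, Module.Finite R (P.X i))
    (hbdd : ∃ N : ℤ, ∀ i ≥ N, IsZero (P.X i))
    (hvan : ∀ i > m, IsZero
      ((((tensorRight (ModuleCat.of R (IsLocalRing.ResidueField R))).mapHomologicalComplex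
        (ComplexShape.up ℤ)).obj P).homology i)) :
    ∀ i > m, IsZero (P.homology i) := by
  obtain ⟨N, hN⟩ := hbdd
  have good : ∀ n : ℕ, m < N - n → GoodAt P (N - n) := by
    intro n
    induction n with
    | zero =>
      intro _
      simpa using baseAux P N (hN N le_rfl)
    | succ n ih =>
      intro hm
      have h1 : GoodAt P (N - n) := ih (by omega)
      have h2 : GoodAt P (N - (n + 1 : ℕ) + 1) := by
        rw [show (N - ((n + 1 : ℕ) : ℤ) + 1 : ℤ) = N - n by push_cast; ring]
        exact h1
      have hq : (((tensorRight (ModuleCat.of R (IsLocalRing.ResidueField R))).mapHomologicalComplex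
          (ComplexShape.up ℤ)).obj P).ExactAt (N - (n + 1 : ℕ)) := by
        rw [HomologicalComplex.exactAt_iff_isZero_homology]
        exact hvan _ (by push_cast; omega)
      have := stepAux P (N - (n + 1 : ℕ)) (hfree _) (hfg _) hq (by push_cast at h2 ⊢; exact h2)
      exact this
  intro i hi
  rw [← P.exactAt_iff_isZero_homology]
  rcases le_or_gt N i with h | h
  · exact (baseAux P i (hN i h)).1
  · have hg : GoodAt P i := by
      have := good (N - i).toNat (by omega)
      rwa [show (N - ((N - i).toNat : ℤ)) = i by omega] at this
    exact hg.1
end
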